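/- Let h₊, h₋ : ℝ → Matrix (Fin n) (Fin n) ℂ be differentiable families of invertible matrices, and define H(k) = Matrix.fromBlocks 0 (h₊ k) (h₋ k) 0. Then H(k) is invertible for every k, and the trace identity Tr[H(k)⁻¹ · (deriv H k)] = Tr[h₊(k)⁻¹ · (deriv h₊ k)] + Tr[h₋(k)⁻¹ · (deriv h₋ k)] holds pointwise; consequently (1/(2πi)) ∫₀^{2π} Tr[H(k)⁻¹ · (deriv H k)] dk = w₁[h₊] + w₁[h₋], i.e., the 1D winding number of the full sublattice-symmetric Hamiltonian is the sum of the 1D winding numbers of its off-diagonal blocks. -/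

import Mathlib

open Matrix MeasureTheory intervalIntegral

/-- Entrywise derivative of a one-parameter family of matrices. -/
noncomputable def matDeriv {m : Type*} (h : ℝ → Matrix m m ℂ) (k : ℝ) : Matrix m m ℂ :=
  Matrix.of fun i j => deriv (fun t => h t i j) k

/-- The 1D winding number `w₁[h] = (1/(2πi)) ∫₀^{2π} Tr[h(k)⁻¹ · h'(k)] dk` of a family of
invertible matrices, with `h'` the entrywise derivative. -/
noncomputable def w1 {m : Type*} [Fintype m] [DecidableEq m] (h : ℝ → Matrix m m ℂ) : ℂ :=
  (1 / (2 * Real.pi * Complex.I)) *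
    ∫ k in (0 : ℝ)..(2 * Real.pi), ((h k)⁻¹ * matDeriv h k).trace

lemma trace_fromBlocks' {n : ℕ} (A B C D : Matrix (Fin n) (Fin n) ℂ) :
    (Matrix.fromBlocks A B C D).trace = A.trace + D.trace := by
  simp [Matrix.trace, Matrix.diag, Fintype.sum_sum_type, Matrix.fromBlocks]

/-- For differentiable families of invertible matrices `h₊, h₋` and the
sublattice-symmetric Hamiltonian `H(k) = fromBlocks 0 (h₊ k) (h₋ k) 0`, `H(k)` is invertible for
every `k`, the trace identity
`Tr[H⁻¹ H'] = Tr[h₊⁻¹ h₊'] + Tr[h₋⁻¹ h₋']` holds pointwise, and consequently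
`(1/(2πi)) ∫₀^{2π} Tr[H(k)⁻¹ H'(k)] dk = w₁[h₊] + w₁[h₋]`. -/
theorem winding_number_of_sublattice_block_hamiltonian
    {n : ℕ} (hp hm : ℝ → Matrix (Fin n) (Fin n) ℂ)
    (hdiffp : ∀ i j, Differentiable ℝ fun k => hp k i j)
    (hdiffm : ∀ i j, Differentiable ℝ fun k => hm k i j)
    (hunitp : ∀ k, IsUnit (hp k)) (hunitm : ∀ k, IsUnit (hm k))
    (hintp : IntervalIntegrable (fun k => ((hp k)⁻¹ * matDeriv hp k).trace)
      volume 0 (2 * Real.pi))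
    (hintm : IntervalIntegrable (fun k => ((hm k)⁻¹ * matDeriv hm k).trace)
      volume 0 (2 * Real.pi))
    (H : ℝ → Matrix (Fin n ⊕ Fin n) (Fin n ⊕ Fin n) ℂ)
    (hH : ∀ k, H k = Matrix.fromBlocks 0 (hp k) (hm k) 0) :
    (∀ k, IsUnit (H k)) ∧
    (∀ k, ((H k)⁻¹ * matDeriv H k).trace =
      ((hp k)⁻¹ * matDeriv hp k).trace + ((hm k)⁻¹ * matDeriv hm k).trace) ∧
    (1 / (2 * Real.pi * Complex.I)) *
      (∫ k in (0 : ℝ)..(2 * Real.pi), ((H k)⁻¹ * matDeriv H k).trace) = w1 hp + w1 hm := by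
  -- explicit right inverse
  have hmul : ∀ k, H k * Matrix.fromBlocks 0 (hm k)⁻¹ (hp k)⁻¹ 0 = 1 := by
    intro k
    rw [hH k, Matrix.fromBlocks_multiply]
    simp [Matrix.mul_nonsing_inv _ ((hp k).isUnit_iff_isUnit_det.mp (hunitp k)),
      Matrix.mul_nonsing_inv _ ((hm k).isUnit_iff_isUnit_det.mp (hunitm k)),
      Matrix.fromBlocks_one]
  have hunitH : ∀ k, IsUnit (H k) := by
    intro k
    rw [Matrix.isUnit_iff_isUnit_det]
    have := congrArg Matrix.det (hmul k)
    rw [Matrix.det_mul, Matrix.det_one] at this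
    exact IsUnit.of_mul_eq_one _ this
  have hinv : ∀ k, (H k)⁻¹ = Matrix.fromBlocks 0 (hm k)⁻¹ (hp k)⁻¹ 0 := fun k =>
    Matrix.inv_eq_right_inv (hmul k)
  have hmd : ∀ k, matDeriv H k = Matrix.fromBlocks 0 (matDeriv hp k) (matDeriv hm k) 0 := by
    intro k
    ext i j
    cases i <;> cases j <;>
      simp [matDeriv, Matrix.fromBlocks, funext fun t => hH t]
  have htr : ∀ k, ((H k)⁻¹ * matDeriv H k).trace =
      ((hp k)⁻¹ * matDeriv hp k).trace + ((hm k)⁻¹ * matDeriv hm k).trace := by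
    intro k
    rw [hinv k, hmd k, Matrix.fromBlocks_multiply]
    simp only [Matrix.zero_mul, Matrix.mul_zero, add_zero, zero_add]
    rw [trace_fromBlocks']
    ring
  refine ⟨hunitH, htr, ?_⟩
  have : (∫ k in (0 : ℝ)..(2 * Real.pi), ((H k)⁻¹ * matDeriv H k).trace) =
      (∫ k in (0 : ℝ)..(2 * Real.pi), ((hp k)⁻¹ * matDeriv hp k).trace) +
      (∫ k in (0 : ℝ)..(2 * Real.pi), ((hm k)⁻¹ * matDeriv hm k).trace) := by
    rw [← intervalIntegral.integral_add hintp hintm]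
    exact intervalIntegral.integral_congr fun k _ => htr k
  rw [this, w1, w1]
  ring
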